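/- Let G=(V,E) be a finite simple graph and let 1 ≤ k ≤ |V|. Then λ_1(L(F_k(G))) ≤ |E| + τ(G), where τ(G) is the covering number of G. -/

import Mathlib

open Finset
open scoped symmDiff

/-- The `k`-th token graph of `G`: its vertices are the `k`-element subsets of the
vertex set of `G`, two of them being adjacent whenever their symmetric difference
is an edge of `G`. -/
def tokenGraph {V : Type*} [DecidableEq V] (G : SimpleGraph V) (k : ℕ) :
    SimpleGraph {s : Finset V // s.card = k} where
  Adj σ τ := ∃ u v, G.Adj u v ∧ σ.val ∆ τ.val = {u, v}
  symm := by
    constructor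
    rintro σ τ ⟨u, v, huv, hd⟩
    exact ⟨u, v, huv, by rwa [symmDiff_comm]⟩
  loopless := by
    constructor
    rintro σ ⟨u, v, huv, hd⟩
    rw [symmDiff_self] at hd
    have hu : u ∈ ({u, v} : Finset V) := by simp
    rw [← hd] at hu
    simp at hu

instance {V : Type*} [Fintype V] [DecidableEq V] (G : SimpleGraph V) [DecidableRel G.Adj]
    (k : ℕ) : DecidableRel (tokenGraph G k).Adj := fun σ τ =>
  inferInstanceAs (Decidable (∃ u v, G.Adj u v ∧ σ.val ∆ τ.val = {u, v}))

/-- The largest eigenvalue of a (symmetric) real matrix, expressed as the supremum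
of the set of its real eigenvalues. -/
noncomputable def maxEigenvalue {n : Type*} [Fintype n] (M : Matrix n n ℝ) : ℝ :=
  sSup {μ : ℝ | ∃ x : n → ℝ, x ≠ 0 ∧ M.mulVec x = μ • x}

/-- The covering number `τ(G)`: the minimum size of a set of vertices meeting
every edge of `G`. -/
noncomputable def coverNumber {V : Type*} [Fintype V] [DecidableEq V] (G : SimpleGraph V)
    [DecidableRel G.Adj] : ℕ :=
  sInf {t : ℕ | ∃ U : Finset V, U.card = t ∧ ∀ e ∈ G.edgeFinset, ∃ v ∈ U, v ∈ e}

set_option linter.unusedSectionVars false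

section aux
variable {V : Type*} [Fintype V] [DecidableEq V]

private lemma sq_sub_le_aux (a b p q : ℝ) (hp : 1 ≤ p) (hq : 1 ≤ q) :
    (a - b)^2 ≤ (p+q)/p * a^2 + (p+q)/q * b^2 := by
  have hp0 : (0:ℝ) < p := lt_of_lt_of_le one_pos hp
  have hq0 : (0:ℝ) < q := lt_of_lt_of_le one_pos hq
  rw [div_mul_eq_mul_div, div_mul_eq_mul_div, div_add_div _ _ hp0.ne' hq0.ne',
    le_div_iff₀ (by positivity)]
  nlinarith [sq_nonneg (q*a + p*b)]

private lemma sum_insert_reindex (u : V) (f : Finset V → ℝ) :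
    ∑ A : Finset V, (if u ∉ A then f (insert u A) else 0)
      = ∑ s : Finset V, (if u ∈ s then f s else 0) := by
  rw [← Finset.sum_filter, ← Finset.sum_filter]
  refine Finset.sum_bij' (fun A _ => insert u A) (fun s _ => s.erase u) ?_ ?_ ?_ ?_ ?_
  · intro A hA
    simp only [mem_filter, mem_univ, true_and] at hA ⊢
    exact mem_insert_self u A
  · intro s hs
    simp only [mem_filter, mem_univ, true_and]
    exact notMem_erase u s
  · intro A hA
    simp only [mem_filter, mem_univ, true_and] at hA
    exact erase_insert hA
  · intro s hs
    simp only [mem_filter, mem_univ, true_and] at hs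
    exact insert_erase hs
  · intro A hA; rfl

private lemma star_bound (y : Finset V → ℝ) (u : V) (N : Finset V) (hu : u ∉ N) :
    ∑ v ∈ N, ∑ A : Finset V,
        (if u ∉ A ∧ v ∉ A then (y (insert u A) - y (insert v A))^2 else 0)
      ≤ ((N.card : ℝ) + 1) * ∑ s : Finset V, (y s)^2 := by
  set d : ℝ := (N.card : ℝ) with hd
  have hd0 : (0:ℝ) ≤ d := Nat.cast_nonneg _
  have hd1 : (0:ℝ) ≤ d + 1 := by linarith
  have hstep : ∑ v ∈ N, ∑ A : Finset V,
      (if u ∉ A ∧ v ∉ A then (y (insert u A) - y (insert v A))^2 else 0)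
      ≤ (∑ v ∈ N, ∑ A : Finset V,
          (if u ∉ A ∧ v ∉ A then (d+1)/(d - ((N ∩ A).card:ℝ)) * (y (insert u A))^2 else 0))
        + (∑ v ∈ N, ∑ A : Finset V,
          (if u ∉ A ∧ v ∉ A then (d+1)/(((N ∩ A).card:ℝ)+1) * (y (insert v A))^2 else 0)) := by
    rw [← Finset.sum_add_distrib]
    refine Finset.sum_le_sum fun v hv => ?_
    rw [← Finset.sum_add_distrib]
    refine Finset.sum_le_sum fun A _ => ?_
    by_cases hc : u ∉ A ∧ v ∉ A
    · simp only [hc, if_true]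
      have hvsub : N ∩ A ⊂ N := by
        refine (Finset.ssubset_iff_of_subset Finset.inter_subset_left).mpr ⟨v, hv, ?_⟩
        intro hmem
        exact hc.2 (Finset.mem_inter.mp hmem).2
      have hslt : (N ∩ A).card < N.card := Finset.card_lt_card hvsub
      have hp : (1:ℝ) ≤ d - ((N ∩ A).card:ℝ) := by
        rw [hd]
        have : ((N ∩ A).card : ℝ) + 1 ≤ (N.card : ℝ) := by exact_mod_cast hslt
        linarith
      have hq : (1:ℝ) ≤ ((N ∩ A).card:ℝ) + 1 := by
        have : (0:ℝ) ≤ ((N ∩ A).card:ℝ) := Nat.cast_nonneg _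
        linarith
      have := sq_sub_le_aux (y (insert u A)) (y (insert v A))
        (d - ((N ∩ A).card:ℝ)) (((N ∩ A).card:ℝ) + 1) hp hq
      have hpq : d - ((N ∩ A).card:ℝ) + (((N ∩ A).card:ℝ) + 1) = d + 1 := by ring
      rw [hpq] at this
      exact this
    · simp only [hc, if_false]
      norm_num
  have hS1 : ∑ v ∈ N, ∑ A : Finset V,
      (if u ∉ A ∧ v ∉ A then (d+1)/(d - ((N ∩ A).card:ℝ)) * (y (insert u A))^2 else 0)
      ≤ (d+1) * ∑ s : Finset V, (if u ∈ s then (y s)^2 else 0) := by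
    rw [Finset.sum_comm]
    calc ∑ A : Finset V, ∑ v ∈ N,
        (if u ∉ A ∧ v ∉ A then (d+1)/(d - ((N ∩ A).card:ℝ)) * (y (insert u A))^2 else 0)
        ≤ ∑ A : Finset V, (d+1) * (if u ∉ A then (y (insert u A))^2 else 0) := by
          refine Finset.sum_le_sum fun A _ => ?_
          by_cases hA : u ∉ A
          · simp only [hA, not_false_eq_true, true_and, if_true]
            have hsum : ∑ v ∈ N, (if v ∉ A then
                  (d+1)/(d - ((N ∩ A).card:ℝ)) * (y (insert u A))^2 else 0)
                = ((N \ A).card : ℝ) * ((d+1)/(d - ((N ∩ A).card:ℝ)) * (y (insert u A))^2) := by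
              rw [Finset.sum_ite, Finset.sum_const_zero, add_zero, Finset.sum_const,
                nsmul_eq_mul, Finset.sdiff_eq_filter]
            rw [hsum]
            have hcard : ((N \ A).card : ℝ) = d - ((N ∩ A).card:ℝ) := by
              have h := Finset.card_inter_add_card_sdiff N A
              rw [hd]
              push_cast [← h]
              ring
            rw [hcard]
            by_cases hz : d - ((N ∩ A).card:ℝ) = 0
            · rw [hz]
              have : (0:ℝ) ≤ (y (insert u A))^2 := sq_nonneg _
              nlinarith
            · rw [← mul_assoc, mul_comm (d - ((N ∩ A).card:ℝ)), div_mul_cancel₀ _ hz]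
          · simp only [hA, false_and, if_false]
            simp
      _ = (d+1) * ∑ s : Finset V, (if u ∈ s then (y s)^2 else 0) := by
          rw [← Finset.mul_sum, sum_insert_reindex u (fun s => (y s)^2)]
  have hS2 : ∑ v ∈ N, ∑ A : Finset V,
      (if u ∉ A ∧ v ∉ A then (d+1)/(((N ∩ A).card:ℝ)+1) * (y (insert v A))^2 else 0)
      ≤ (d+1) * ∑ s : Finset V, (if u ∉ s then (y s)^2 else 0) := by
    have hre : ∀ v ∈ N, ∑ A : Finset V,
        (if u ∉ A ∧ v ∉ A then (d+1)/(((N ∩ A).card:ℝ)+1) * (y (insert v A))^2 else 0)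
        = ∑ s : Finset V, (if v ∈ s ∧ u ∉ s then (d+1)/((N ∩ s).card:ℝ) * (y s)^2 else 0) := by
      intro v hv
      have hne : u ≠ v := fun h => hu (h ▸ hv)
      have step_a : ∑ A : Finset V,
          (if u ∉ A ∧ v ∉ A then (d+1)/(((N ∩ A).card:ℝ)+1) * (y (insert v A))^2 else 0)
          = ∑ A : Finset V, (if v ∉ A then
              (if u ∉ insert v A then
                (d+1)/(((N ∩ ((insert v A).erase v)).card:ℝ)+1) * (y (insert v A))^2 else 0)
              else 0) := by
        refine Finset.sum_congr rfl fun A _ => ?_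
        by_cases hvA : v ∉ A
        · simp only [hvA, not_false_eq_true, and_true, if_true]
          rw [Finset.erase_insert hvA]
          have : u ∉ insert v A ↔ u ∉ A := by
            simp [Finset.mem_insert, hne]
          rw [if_congr this rfl rfl]
        · simp [hvA]
      rw [step_a, sum_insert_reindex v (fun s => if u ∉ s then
        (d+1)/(((N ∩ (s.erase v)).card:ℝ)+1) * (y s)^2 else 0)]
      refine Finset.sum_congr rfl fun s _ => ?_
      by_cases hvs : v ∈ s
      · simp only [hvs, if_true, true_and]
        by_cases hus : u ∉ s
        · simp only [hus, if_true]
          have hmem : v ∈ N ∩ s := Finset.mem_inter.mpr ⟨hv, hvs⟩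
          have hcc : ((N ∩ (s.erase v)).card:ℝ) + 1 = ((N ∩ s).card:ℝ) := by
            rw [Finset.inter_erase]
            have := Finset.card_erase_add_one hmem
            exact_mod_cast this
          rw [hcc]
        · simp [hus]
      · simp [hvs]
    calc ∑ v ∈ N, ∑ A : Finset V,
        (if u ∉ A ∧ v ∉ A then (d+1)/(((N ∩ A).card:ℝ)+1) * (y (insert v A))^2 else 0)
        = ∑ v ∈ N, ∑ s : Finset V,
            (if v ∈ s ∧ u ∉ s then (d+1)/((N ∩ s).card:ℝ) * (y s)^2 else 0) :=
          Finset.sum_congr rfl hre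
      _ = ∑ s : Finset V, ∑ v ∈ N,
            (if v ∈ s ∧ u ∉ s then (d+1)/((N ∩ s).card:ℝ) * (y s)^2 else 0) :=
          Finset.sum_comm
      _ ≤ ∑ s : Finset V, (d+1) * (if u ∉ s then (y s)^2 else 0) := by
          refine Finset.sum_le_sum fun s _ => ?_
          by_cases hus : u ∉ s
          · simp only [hus, not_false_eq_true, and_true, if_true]
            have hsum : ∑ v ∈ N, (if v ∈ s then (d+1)/((N ∩ s).card:ℝ) * (y s)^2 else 0)
                = ((N ∩ s).card : ℝ) * ((d+1)/((N ∩ s).card:ℝ) * (y s)^2) := by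
              rw [Finset.sum_ite, Finset.sum_const_zero, add_zero, Finset.sum_const,
                nsmul_eq_mul, Finset.filter_mem_eq_inter]
            rw [hsum]
            by_cases hz : ((N ∩ s).card:ℝ) = 0
            · rw [hz]
              have : (0:ℝ) ≤ (y s)^2 := sq_nonneg _
              nlinarith
            · rw [← mul_assoc, mul_comm ((N ∩ s).card:ℝ), div_mul_cancel₀ _ hz]
          · simp only [hus, and_false, if_false]
            simp
      _ = (d+1) * ∑ s : Finset V, (if u ∉ s then (y s)^2 else 0) := by
          rw [Finset.mul_sum]
  calc ∑ v ∈ N, ∑ A : Finset V,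
      (if u ∉ A ∧ v ∉ A then (y (insert u A) - y (insert v A))^2 else 0)
      ≤ _ + _ := hstep
    _ ≤ (d+1) * ∑ s : Finset V, (if u ∈ s then (y s)^2 else 0)
        + (d+1) * ∑ s : Finset V, (if u ∉ s then (y s)^2 else 0) := add_le_add hS1 hS2
    _ = (d+1) * ∑ s : Finset V, (y s)^2 := by
        rw [← mul_add, ← Finset.sum_add_distrib]
        congr 1
        refine Finset.sum_congr rfl fun s _ => ?_
        by_cases hus : u ∈ s <;> simp [hus]

private lemma symmDiff_insert_insert {u v : V} {A : Finset V} (huv : u ≠ v)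
    (hu : u ∉ A) (hv : v ∉ A) :
    (insert u A) ∆ (insert v A) = {u, v} := by
  ext w
  simp only [Finset.mem_symmDiff, Finset.mem_insert, Finset.mem_singleton]
  constructor
  · rintro (⟨h1, h2⟩ | ⟨h1, h2⟩)
    · rcases h1 with rfl | h1
      · exact Or.inl rfl
      · exact absurd (Or.inr h1) h2
    · rcases h1 with rfl | h1
      · exact Or.inr rfl
      · exact absurd (Or.inr h1) h2
  · rintro (rfl | rfl)
    · exact Or.inl ⟨Or.inl rfl, by simp [huv, hu]⟩
    · exact Or.inr ⟨Or.inl rfl, by simp [huv.symm, hv]⟩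

private lemma adj_decomp {G : SimpleGraph V} {k : ℕ} {σ τ : {s : Finset V // s.card = k}}
    (h : (tokenGraph G k).Adj σ τ) :
    ∃ a b, G.Adj a b ∧ a ∉ σ.val ∩ τ.val ∧ b ∉ σ.val ∩ τ.val ∧
      σ.val = insert a (σ.val ∩ τ.val) ∧ τ.val = insert b (σ.val ∩ τ.val) := by
  obtain ⟨u, v, huv, hd⟩ := h
  have hcards : σ.val.card = τ.val.card := by rw [σ.prop, τ.prop]
  have hsd : (σ.val \ τ.val).card = (τ.val \ σ.val).card := Finset.card_sdiff_comm hcards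
  have hΔ : σ.val ∆ τ.val = (σ.val \ τ.val) ∪ (τ.val \ σ.val) := by
    rw [symmDiff_def]; rfl
  have hΔcard : (σ.val \ τ.val).card + (τ.val \ σ.val).card = 2 := by
    rw [← Finset.card_union_of_disjoint disjoint_sdiff_sdiff, ← hΔ, hd]
    exact Finset.card_pair (G.ne_of_adj huv)
  have h1 : (σ.val \ τ.val).card = 1 := by omega
  have h2 : (τ.val \ σ.val).card = 1 := by omega
  obtain ⟨a, ha⟩ := Finset.card_eq_one.mp h1
  obtain ⟨b, hb⟩ := Finset.card_eq_one.mp h2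
  have haσ : a ∈ σ.val \ τ.val := by rw [ha]; exact Finset.mem_singleton_self a
  have hbτ : b ∈ τ.val \ σ.val := by rw [hb]; exact Finset.mem_singleton_self b
  have hauv : a = u ∨ a = v := by
    have : a ∈ σ.val ∆ τ.val := by rw [hΔ]; exact Finset.mem_union_left _ haσ
    rw [hd] at this
    simpa using this
  have hbuv : b = u ∨ b = v := by
    have : b ∈ σ.val ∆ τ.val := by rw [hΔ]; exact Finset.mem_union_right _ hbτ
    rw [hd] at this
    simpa using this
  have hab : a ≠ b := by
    rintro rfl
    exact (Finset.mem_sdiff.mp haσ).2 (Finset.mem_sdiff.mp hbτ).1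
  have hadj : G.Adj a b := by
    rcases hauv with rfl | rfl <;> rcases hbuv with rfl | rfl
    · exact absurd rfl hab
    · exact huv
    · exact huv.symm
    · exact absurd rfl hab
  refine ⟨a, b, hadj, ?_, ?_, ?_, ?_⟩
  · intro hmem
    exact (Finset.mem_sdiff.mp haσ).2 (Finset.mem_inter.mp hmem).2
  · intro hmem
    exact (Finset.mem_sdiff.mp hbτ).2 (Finset.mem_inter.mp hmem).1
  · rw [Finset.insert_eq, ← ha]
    exact (Finset.sdiff_union_inter _ _).symm
  · rw [Finset.insert_eq, ← hb, Finset.inter_comm]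
    exact (Finset.sdiff_union_inter _ _).symm

private lemma token_sum_eq (G : SimpleGraph V) [DecidableRel G.Adj] (k : ℕ)
    (x : {s : Finset V // s.card = k} → ℝ) (y : Finset V → ℝ)
    (hy : ∀ (s : Finset V) (h : s.card = k), y s = x ⟨s, h⟩) :
    ∑ σ : {s : Finset V // s.card = k}, ∑ τ : {s : Finset V // s.card = k},
        (if (tokenGraph G k).Adj σ τ then (x σ - x τ)^2 else 0)
      = ∑ u : V, ∑ v : V, ∑ A : Finset V,
        (if G.Adj u v ∧ u ∉ A ∧ v ∉ A ∧ A.card + 1 = k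
          then (y (insert u A) - y (insert v A))^2 else 0) := by
  classical
  have hL : (∑ p ∈ Finset.univ.filter
          (fun p : {s : Finset V // s.card = k} × {s : Finset V // s.card = k} =>
            (tokenGraph G k).Adj p.1 p.2), (x p.1 - x p.2)^2)
      = ∑ σ : {s : Finset V // s.card = k}, ∑ τ : {s : Finset V // s.card = k},
      (if (tokenGraph G k).Adj σ τ then (x σ - x τ)^2 else 0) := by
    rw [Finset.sum_filter, Fintype.sum_prod_type]
  have hR : (∑ z ∈ Finset.univ.filter
          (fun z : V × V × Finset V =>
            G.Adj z.1 z.2.1 ∧ z.1 ∉ z.2.2 ∧ z.2.1 ∉ z.2.2 ∧ z.2.2.card + 1 = k),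
          (y (insert z.1 z.2.2) - y (insert z.2.1 z.2.2))^2)
      = ∑ u : V, ∑ v : V, ∑ A : Finset V,
      (if G.Adj u v ∧ u ∉ A ∧ v ∉ A ∧ A.card + 1 = k
        then (y (insert u A) - y (insert v A))^2 else 0) := by
    rw [Finset.sum_filter, Fintype.sum_prod_type]
    refine Finset.sum_congr rfl fun u _ => ?_
    rw [Fintype.sum_prod_type]
  rw [← hL, ← hR]
  symm
  have hcardmem : ∀ z : V × V × Finset V, z ∈ Finset.univ.filter
      (fun z : V × V × Finset V =>
        G.Adj z.1 z.2.1 ∧ z.1 ∉ z.2.2 ∧ z.2.1 ∉ z.2.2 ∧ z.2.2.card + 1 = k) →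
      (insert z.1 z.2.2).card = k ∧ (insert z.2.1 z.2.2).card = k := by
    intro z hz
    simp only [Finset.mem_filter, Finset.mem_univ, true_and] at hz
    obtain ⟨_, h1, h2, h3⟩ := hz
    rw [Finset.card_insert_of_notMem h1, Finset.card_insert_of_notMem h2]
    exact ⟨h3, h3⟩
  refine Finset.sum_bij (fun z hz =>
      (⟨insert z.1 z.2.2, (hcardmem z hz).1⟩, ⟨insert z.2.1 z.2.2, (hcardmem z hz).2⟩))
    ?_ ?_ ?_ ?_
  · rintro ⟨u, v, A⟩ hz
    simp only [Finset.mem_filter, Finset.mem_univ, true_and] at hz ⊢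
    obtain ⟨hadj, hu, hv, hk⟩ := hz
    exact ⟨u, v, hadj, symmDiff_insert_insert (G.ne_of_adj hadj) hu hv⟩
  · rintro ⟨u, v, A⟩ hz ⟨u', v', A'⟩ hz' heq
    simp only [Finset.mem_filter, Finset.mem_univ, true_and] at hz hz'
    obtain ⟨hadj, hu, hv, hk⟩ := hz
    obtain ⟨hadj', hu', hv', hk'⟩ := hz'
    rw [Prod.ext_iff, Subtype.ext_iff, Subtype.ext_iff] at heq
    obtain ⟨h1, h2⟩ := heq
    simp only at h1 h2
    have hΔeq : ({u, v} : Finset V) = {u', v'} := by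
      rw [← symmDiff_insert_insert (G.ne_of_adj hadj) hu hv,
        ← symmDiff_insert_insert (G.ne_of_adj hadj') hu' hv', h1, h2]
    by_cases huu : u = u'
    · subst huu
      have hAA : A = A' := by
        rw [← Finset.erase_insert hu, ← Finset.erase_insert hu', h1]
      subst hAA
      have hvv : v = v' := by
        have : v ∈ insert v' A := by rw [← h2]; exact Finset.mem_insert_self v A
        rcases Finset.mem_insert.mp this with h | h
        · exact h
        · exact absurd h hv
      simp [hvv]
    · exfalso
      have huv' : u = v' := by
        have : u ∈ ({u', v'} : Finset V) := by
          rw [← hΔeq]; exact Finset.mem_insert_self u {v}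
        rcases Finset.mem_insert.mp this with h | h
        · exact absurd h huu
        · simpa using h
      have : u ∈ insert u' A' := by rw [← h1]; exact Finset.mem_insert_self u A
      rcases Finset.mem_insert.mp this with h | h
      · exact huu h
      · rw [huv'] at h; exact hv' h
  · rintro ⟨σ, τ⟩ hp
    simp only [Finset.mem_filter, Finset.mem_univ, true_and] at hp
    obtain ⟨a, b, hadj, haC, hbC, hσ, hτ⟩ := adj_decomp hp
    have hC : (σ.val ∩ τ.val).card + 1 = k := by
      have := σ.prop
      rw [hσ, Finset.card_insert_of_notMem haC] at this
      exact this
    refine ⟨(a, b, σ.val ∩ τ.val), ?_, ?_⟩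
    · simp only [Finset.mem_filter, Finset.mem_univ, true_and]
      exact ⟨hadj, haC, hbC, hC⟩
    · simp only [Prod.ext_iff, Subtype.ext_iff]
      exact ⟨hσ.symm, hτ.symm⟩
  · rintro ⟨u, v, A⟩ hz
    have hz' := hz
    simp only [Finset.mem_filter, Finset.mem_univ, true_and] at hz'
    rw [hy _ (hcardmem (u, v, A) hz).1, hy _ (hcardmem (u, v, A) hz).2]

end aux

theorem stmt_18 {V : Type*} [Fintype V] [DecidableEq V] (G : SimpleGraph V)
    [DecidableRel G.Adj] (k : ℕ) (hk1 : 1 ≤ k) (hkn : k ≤ Fintype.card V) :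
    maxEigenvalue ((tokenGraph G k).lapMatrix ℝ) ≤
      (G.edgeFinset.card : ℝ) + (coverNumber G : ℝ) := by
  classical
  have hVne : Nonempty V := Fintype.card_pos_iff.mp (lt_of_lt_of_le Nat.one_pos (hk1.trans hkn))
  have hRHS0 : (0:ℝ) ≤ (G.edgeFinset.card : ℝ) + (coverNumber G : ℝ) := by positivity
  refine Real.sSup_le ?_ hRHS0
  rintro μ ⟨x, hx0, hμx⟩
  obtain ⟨U, hUcard, hUcov⟩ : ∃ U : Finset V, U.card = coverNumber G ∧
      ∀ e ∈ G.edgeFinset, ∃ w ∈ U, w ∈ e := by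
    have hne : {t : ℕ | ∃ U : Finset V, U.card = t ∧
        ∀ e ∈ G.edgeFinset, ∃ v ∈ U, v ∈ e}.Nonempty := by
      refine ⟨Fintype.card V, Finset.univ, by simp [Finset.card_univ], fun e _ => ?_⟩
      induction e with
      | _ a b => exact ⟨a, Finset.mem_univ a, Sym2.mem_mk_left a b⟩
    exact Nat.sInf_mem hne
  set cv : Sym2 V → V := fun e =>
    if h : e ∈ G.edgeFinset then (hUcov e h).choose else Classical.arbitrary V with hcv
  have hcvU : ∀ (e : Sym2 V) (h : e ∈ G.edgeFinset), cv e ∈ U ∧ cv e ∈ e := by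
    intro e h
    rw [hcv]
    simp only [dif_pos h]
    obtain ⟨h1, h2⟩ := (hUcov e h).choose_spec
    exact ⟨h1, h2⟩
  set c : V → V → V := fun a b => cv s(a, b) with hc
  have hmemE : ∀ {a b : V}, G.Adj a b → s(a, b) ∈ G.edgeFinset := by
    intro a b h
    rwa [SimpleGraph.mem_edgeFinset, SimpleGraph.mem_edgeSet]
  have hcU : ∀ {a b : V}, G.Adj a b → c a b ∈ U := fun {a b} h => (hcvU _ (hmemE h)).1
  have hcab : ∀ {a b : V}, G.Adj a b → c a b = a ∨ c a b = b := by
    intro a b h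
    have := (hcvU _ (hmemE h)).2
    rwa [Sym2.mem_iff] at this
  have hcsymm : ∀ a b : V, c a b = c b a := by
    intro a b
    rw [hc]
    simp only
    rw [Sym2.eq_swap]
  set y : Finset V → ℝ := fun s => if h : s.card = k then x ⟨s, h⟩ else 0 with hy
  have hyx : ∀ (s : Finset V) (h : s.card = k), y s = x ⟨s, h⟩ := by
    intro s h
    rw [hy]
    simp only [dif_pos h]
  set S : ℝ := ∑ σ : {s : Finset V // s.card = k}, (x σ)^2 with hSdef
  have hS0 : 0 < S := by
    obtain ⟨σ0, hσ0⟩ := Function.ne_iff.mp hx0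
    have h1 : 0 < (x σ0)^2 := by
      have : x σ0 ≠ 0 := hσ0
      positivity
    exact lt_of_lt_of_le h1 (Finset.single_le_sum (fun i _ => sq_nonneg (x i)) (Finset.mem_univ σ0))
  have hSy : ∑ s : Finset V, (y s)^2 = S := by
    have h1 : ∑ s : Finset V, (y s)^2
        = ∑ s ∈ Finset.univ.filter (fun s : Finset V => s.card = k), (y s)^2 := by
      symm
      apply Finset.sum_subset (Finset.filter_subset _ _)
      intro s _ hs
      simp only [Finset.mem_filter, Finset.mem_univ, true_and] at hs
      rw [hy]
      simp [dif_neg hs]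
    rw [h1, hSdef,
      Finset.sum_subtype (p := fun s : Finset V => s.card = k)
        (Finset.univ.filter (fun s : Finset V => s.card = k))
        (by simp) (fun s => (y s)^2)]
    refine Finset.sum_congr rfl fun σ _ => ?_
    rw [hyx σ.val σ.prop]
  have hquad : μ * S = (∑ σ : {s : Finset V // s.card = k},
      ∑ τ : {s : Finset V // s.card = k},
      (if (tokenGraph G k).Adj σ τ then (x σ - x τ)^2 else 0)) / 2 := by
    have h1 : dotProduct x (((tokenGraph G k).lapMatrix ℝ).mulVec x)
        = (∑ σ : {s : Finset V // s.card = k}, ∑ τ : {s : Finset V // s.card = k},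
          (if (tokenGraph G k).Adj σ τ then (x σ - x τ)^2 else 0)) / 2 := by
      rw [← Matrix.toLinearMap₂'_apply', SimpleGraph.lapMatrix_toLinearMap₂']
    rw [← h1, hμx, dotProduct_smul]
    simp only [smul_eq_mul]
    congr 1
    rw [hSdef]
    unfold dotProduct
    exact Finset.sum_congr rfl fun σ _ => by ring
  set N : V → Finset V := fun u => Finset.univ.filter (fun v => G.Adj u v ∧ c u v = u) with hN
  have key : (∑ σ : {s : Finset V // s.card = k}, ∑ τ : {s : Finset V // s.card = k},
      (if (tokenGraph G k).Adj σ τ then (x σ - x τ)^2 else 0))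
      ≤ 2 * ((((G.edgeFinset.card : ℝ) + (coverNumber G : ℝ))) * S) := by
    rw [token_sum_eq G k x y hyx]
    have hsplit : (∑ u : V, ∑ v : V, ∑ A : Finset V,
        (if G.Adj u v ∧ u ∉ A ∧ v ∉ A ∧ A.card + 1 = k
          then (y (insert u A) - y (insert v A))^2 else 0))
        = (∑ u : V, ∑ v : V, ∑ A : Finset V,
            (if (G.Adj u v ∧ u ∉ A ∧ v ∉ A ∧ A.card + 1 = k) ∧ c u v = u
              then (y (insert u A) - y (insert v A))^2 else 0))
          + (∑ u : V, ∑ v : V, ∑ A : Finset V,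
            (if (G.Adj u v ∧ u ∉ A ∧ v ∉ A ∧ A.card + 1 = k) ∧ c u v ≠ u
              then (y (insert u A) - y (insert v A))^2 else 0)) := by
      rw [← Finset.sum_add_distrib]
      refine Finset.sum_congr rfl fun u _ => ?_
      rw [← Finset.sum_add_distrib]
      refine Finset.sum_congr rfl fun v _ => ?_
      rw [← Finset.sum_add_distrib]
      refine Finset.sum_congr rfl fun A _ => ?_
      by_cases h1 : G.Adj u v ∧ u ∉ A ∧ v ∉ A ∧ A.card + 1 = k
      · by_cases h2 : c u v = u <;> simp [h1, h2]
      · simp [h1]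
    have hswap : (∑ u : V, ∑ v : V, ∑ A : Finset V,
        (if (G.Adj u v ∧ u ∉ A ∧ v ∉ A ∧ A.card + 1 = k) ∧ c u v ≠ u
          then (y (insert u A) - y (insert v A))^2 else 0))
        = (∑ u : V, ∑ v : V, ∑ A : Finset V,
            (if (G.Adj u v ∧ u ∉ A ∧ v ∉ A ∧ A.card + 1 = k) ∧ c u v = u
              then (y (insert u A) - y (insert v A))^2 else 0)) := by
      rw [Finset.sum_comm]
      refine Finset.sum_congr rfl fun u _ => Finset.sum_congr rfl fun v _ =>
        Finset.sum_congr rfl fun A _ => ?_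
      refine if_congr ?_ (by ring) rfl
      constructor
      · rintro ⟨⟨h1, h2, h3, h4⟩, h5⟩
        have h6 : c v u = u := by
          rcases hcab h1 with h | h
          · exact absurd h h5
          · exact h
        exact ⟨⟨h1.symm, h3, h2, h4⟩, (hcsymm u v).trans h6⟩
      · rintro ⟨⟨h1, h2, h3, h4⟩, h5⟩
        exact ⟨⟨h1.symm, h3, h2, h4⟩,
          fun h => G.ne_of_adj h1 (h5.symm.trans ((hcsymm u v).trans h))⟩
    rw [hsplit, hswap, ← two_mul]
    have hT1 : (∑ u : V, ∑ v : V, ∑ A : Finset V,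
        (if (G.Adj u v ∧ u ∉ A ∧ v ∉ A ∧ A.card + 1 = k) ∧ c u v = u
          then (y (insert u A) - y (insert v A))^2 else 0))
        ≤ ((G.edgeFinset.card : ℝ) + (coverNumber G : ℝ)) * S := by
      have hzero : ∀ u ∈ Finset.univ, u ∉ U → (∑ v : V, ∑ A : Finset V,
          (if (G.Adj u v ∧ u ∉ A ∧ v ∉ A ∧ A.card + 1 = k) ∧ c u v = u
            then (y (insert u A) - y (insert v A))^2 else 0)) = 0 := by
        intro u _ hu
        refine Finset.sum_eq_zero fun v _ => Finset.sum_eq_zero fun A _ => ?_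
        rw [if_neg]
        rintro ⟨⟨h1, -⟩, h5⟩
        exact hu (h5 ▸ hcU h1)
      rw [← Finset.sum_subset (Finset.subset_univ U) hzero]
      have hstar : ∀ u ∈ U, (∑ v : V, ∑ A : Finset V,
          (if (G.Adj u v ∧ u ∉ A ∧ v ∉ A ∧ A.card + 1 = k) ∧ c u v = u
            then (y (insert u A) - y (insert v A))^2 else 0))
          ≤ (((N u).card : ℝ) + 1) * S := by
        intro u _
        have h2 : ∀ v : V, (∑ A : Finset V,
            (if (G.Adj u v ∧ u ∉ A ∧ v ∉ A ∧ A.card + 1 = k) ∧ c u v = u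
              then (y (insert u A) - y (insert v A))^2 else 0))
            ≤ (if G.Adj u v ∧ c u v = u then (∑ A : Finset V,
              (if u ∉ A ∧ v ∉ A then (y (insert u A) - y (insert v A))^2 else 0)) else 0) := by
          intro v
          by_cases hv : G.Adj u v ∧ c u v = u
          · rw [if_pos hv]
            refine Finset.sum_le_sum fun A _ => ?_
            by_cases hA : u ∉ A ∧ v ∉ A
            · rw [if_pos hA]
              by_cases hcard : (G.Adj u v ∧ u ∉ A ∧ v ∉ A ∧ A.card + 1 = k) ∧ c u v = u
              · rw [if_pos hcard]
              · rw [if_neg hcard]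
                positivity
            · rw [if_neg hA, if_neg]
              rintro ⟨⟨-, hA1, hA2, -⟩, -⟩
              exact hA ⟨hA1, hA2⟩
          · rw [if_neg hv]
            refine le_of_eq (Finset.sum_eq_zero fun A _ => ?_)
            rw [if_neg]
            rintro ⟨⟨ha, -, -, -⟩, hcc⟩
            exact hv ⟨ha, hcc⟩
        have h3 : (∑ v : V, ∑ A : Finset V,
            (if (G.Adj u v ∧ u ∉ A ∧ v ∉ A ∧ A.card + 1 = k) ∧ c u v = u
              then (y (insert u A) - y (insert v A))^2 else 0))
            ≤ ∑ v ∈ N u, ∑ A : Finset V,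
              (if u ∉ A ∧ v ∉ A then (y (insert u A) - y (insert v A))^2 else 0) := by
          calc (∑ v : V, ∑ A : Finset V,
              (if (G.Adj u v ∧ u ∉ A ∧ v ∉ A ∧ A.card + 1 = k) ∧ c u v = u
                then (y (insert u A) - y (insert v A))^2 else 0))
              ≤ ∑ v : V, (if G.Adj u v ∧ c u v = u then (∑ A : Finset V,
                (if u ∉ A ∧ v ∉ A then (y (insert u A) - y (insert v A))^2 else 0)) else 0) :=
              Finset.sum_le_sum fun v _ => h2 v
            _ = ∑ v ∈ N u, ∑ A : Finset V,
                (if u ∉ A ∧ v ∉ A then (y (insert u A) - y (insert v A))^2 else 0) := by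
              rw [hN, Finset.sum_filter]
        refine le_trans h3 ?_
        have hu : u ∉ N u := by
          rw [hN]
          simp only [Finset.mem_filter, Finset.mem_univ, true_and]
          rintro ⟨h, -⟩
          exact G.irrefl h
        have := star_bound y u (N u) hu
        rwa [hSy] at this
      calc (∑ u ∈ U, ∑ v : V, ∑ A : Finset V,
          (if (G.Adj u v ∧ u ∉ A ∧ v ∉ A ∧ A.card + 1 = k) ∧ c u v = u
            then (y (insert u A) - y (insert v A))^2 else 0))
          ≤ ∑ u ∈ U, (((N u).card : ℝ) + 1) * S := Finset.sum_le_sum hstar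
        _ = (∑ u ∈ U, (((N u).card : ℝ) + 1)) * S := by rw [Finset.sum_mul]
        _ ≤ ((G.edgeFinset.card : ℝ) + (coverNumber G : ℝ)) * S := by
            refine mul_le_mul_of_nonneg_right ?_ (le_of_lt hS0)
            have hcount : ∑ u ∈ U, (N u).card ≤ G.edgeFinset.card := by
              rw [← Finset.card_sigma]
              refine Finset.card_le_card_of_injOn (fun p => s(p.1, p.2)) ?_ ?_
              · rintro ⟨u, v⟩ hp
                simp only [Finset.mem_coe, Finset.mem_sigma, hN, Finset.mem_filter, Finset.mem_univ,
                  true_and] at hp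
                exact hmemE hp.2.1
              · rintro ⟨u, v⟩ hp ⟨u', v'⟩ hp' hpe
                simp only [Finset.coe_sigma, Set.mem_sigma_iff, Finset.mem_coe, hN,
                  Finset.mem_filter, Finset.mem_univ, true_and, Finset.mem_sigma] at hp hp'
                obtain ⟨-, hadj, hcu⟩ := hp
                obtain ⟨-, hadj', hcu'⟩ := hp'
                simp only [Sym2.eq, Sym2.rel_iff', Prod.mk.injEq, Prod.swap_prod_mk] at hpe
                rcases hpe with ⟨rfl, rfl⟩ | ⟨h1e, h2e⟩
                · rfl
                · exfalso
                  subst h1e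
                  subst h2e
                  exact G.ne_of_adj hadj (hcu.symm.trans ((hcsymm u v).trans hcu'))
            calc (∑ u ∈ U, (((N u).card : ℝ) + 1))
                = ((∑ u ∈ U, (N u).card : ℕ) : ℝ) + (U.card : ℝ) := by
                  rw [Finset.sum_add_distrib]
                  push_cast
                  simp
              _ ≤ ((G.edgeFinset.card : ℝ) + (coverNumber G : ℝ)) := by
                  rw [hUcard]
                  have : ((∑ u ∈ U, (N u).card : ℕ) : ℝ) ≤ (G.edgeFinset.card : ℝ) := by
                    exact_mod_cast hcount
                  linarith
    linarith [hT1]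
  have hfin : μ * S ≤ ((G.edgeFinset.card : ℝ) + (coverNumber G : ℝ)) * S := by
    rw [hquad]
    linarith [key]
  exact le_of_mul_le_mul_right hfin hS0
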